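/- The series product of open quantum systems is associative: for any three n-channel open quantum systems G₁ = (S₁, L₁, H₁), G₂ = (S₂, L₂, H₂), G₃ = (S₃, L₃, H₃) (with unitary scattering matrices), one has (G₃ ◁ G₂) ◁ G₁ = G₃ ◁ (G₂ ◁ G₁), componentwise as triples. -/
import Mathlib


noncomputable section

open Finset

variable {E : Type*} [NormedAddCommGroup E] [InnerProductSpace ℂ E] [CompleteSpace E]

/-- `Im{A} = (A - A*)/(2i)`. -/
def imOp (A : E →L[ℂ] E) : E →L[ℂ] E := (2 * Complex.I)⁻¹ • (A - star A)

/-- An open quantum system `(S, L, H)` with field channels indexed by `ι`: an `ι×ι` matrix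
`S` of bounded operators, an `ι`-vector `L` of bounded operators, and an operator `H`. -/
structure QOpen (ι : Type*) (E : Type*) [NormedAddCommGroup E] [InnerProductSpace ℂ E]
    [CompleteSpace E] where
  S : Matrix ι ι (E →L[ℂ] E)
  L : ι → E →L[ℂ] E
  H : E →L[ℂ] E

/-- The scattering matrix of `G` is unitary: `S†S = SS† = I`. -/
def QOpen.unitaryS {ι : Type*} [Fintype ι] [DecidableEq ι] (G : QOpen ι E) : Prop :=
  G.S.conjTranspose * G.S = 1 ∧ G.S * G.S.conjTranspose = 1

/-- The series product `G₂ ◁ G₁ = (S₂S₁, L₂ + S₂L₁, H₁ + H₂ + Im{L₂†S₂L₁})`. -/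
def series {ι : Type*} [Fintype ι] (G₂ G₁ : QOpen ι E) : QOpen ι E where
  S := G₂.S * G₁.S
  L := fun j => G₂.L j + ∑ k, G₂.S j k * G₁.L k
  H := G₁.H + G₂.H + imOp (∑ j, ∑ k, star (G₂.L j) * G₂.S j k * G₁.L k)

private lemma imOp_add' (A B : E →L[ℂ] E) : imOp (A + B) = imOp A + imOp B := by
  simp only [imOp, star_add]
  rw [← smul_add]
  congr 1
  abel

/-- the series product of open quantum systems is associative:
`(G₃ ◁ G₂) ◁ G₁ = G₃ ◁ (G₂ ◁ G₁)` componentwise as triples, for any three `n`-channel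
open quantum systems (unitary scattering matrices, self-adjoint Hamiltonians). -/
theorem stmt_4 {ι : Type*} [Fintype ι] [DecidableEq ι]
    (G₁ G₂ G₃ : QOpen ι E)
    (hS₁ : G₁.unitaryS) (hS₂ : G₂.unitaryS) (hS₃ : G₃.unitaryS)
    (hH₁ : IsSelfAdjoint G₁.H) (hH₂ : IsSelfAdjoint G₂.H) (hH₃ : IsSelfAdjoint G₃.H) :
    series (series G₃ G₂) G₁ = series G₃ (series G₂ G₁) := by
  obtain ⟨h3, -⟩ := hS₃
  have key : ∀ l k, ∑ j, star (G₃.S j l) * (G₃.S * G₂.S) j k = G₂.S l k := by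
    intro l k
    have h : G₃.S.conjTranspose * (G₃.S * G₂.S) = G₂.S := by
      rw [← mul_assoc, h3, one_mul]
    have := congrFun (congrFun h l) k
    simpa [Matrix.mul_apply, Matrix.conjTranspose_apply] using this
  set f : ι → ι → ι → (E →L[ℂ] E) := fun j k l =>
    star (G₂.L l) * (star (G₃.S j l) * (G₃.S * G₂.S) j k) * G₁.L k with hf
  have hB2 : (∑ j, ∑ k, star (∑ l, G₃.S j l * G₂.L l) * (G₃.S * G₂.S) j k * G₁.L k)
      = ∑ l, ∑ k, star (G₂.L l) * G₂.S l k * G₁.L k := by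
    have step : ∀ j k, star (∑ l, G₃.S j l * G₂.L l) * (G₃.S * G₂.S) j k * G₁.L k
        = ∑ l, f j k l := by
      intro j k
      rw [star_sum, Finset.sum_mul, Finset.sum_mul]
      refine Finset.sum_congr rfl fun l _ => ?_
      simp [hf, star_mul, mul_assoc]
    calc (∑ j, ∑ k, star (∑ l, G₃.S j l * G₂.L l) * (G₃.S * G₂.S) j k * G₁.L k)
        = ∑ j, ∑ k, ∑ l, f j k l := by
          exact Finset.sum_congr rfl fun j _ => Finset.sum_congr rfl fun k _ => step j k
      _ = ∑ j, ∑ l, ∑ k, f j k l :=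
          Finset.sum_congr rfl fun j _ => Finset.sum_comm ..
      _ = ∑ l, ∑ j, ∑ k, f j k l := Finset.sum_comm ..
      _ = ∑ l, ∑ k, ∑ j, f j k l :=
          Finset.sum_congr rfl fun l _ => Finset.sum_comm ..
      _ = ∑ l, ∑ k, star (G₂.L l) * G₂.S l k * G₁.L k := by
          refine Finset.sum_congr rfl fun l _ => Finset.sum_congr rfl fun k _ => ?_
          simp only [hf]
          rw [← Finset.sum_mul, ← Finset.mul_sum, key l k]
  simp only [series, QOpen.mk.injEq]
  refine ⟨mul_assoc _ _ _, ?_, ?_⟩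
  · funext j
    simp only [Matrix.mul_apply, Finset.sum_mul, mul_add, Finset.mul_sum,
      Finset.sum_add_distrib, mul_assoc, add_assoc]
    congr 1
    congr 1
    exact Finset.sum_comm ..
  · have hB : (∑ j, ∑ k, star (G₃.L j + ∑ l, G₃.S j l * G₂.L l) * (G₃.S * G₂.S) j k * G₁.L k)
        = (∑ j, ∑ k, star (G₃.L j) * (G₃.S * G₂.S) j k * G₁.L k)
          + ∑ l, ∑ k, star (G₂.L l) * G₂.S l k * G₁.L k := by
      rw [← hB2, ← Finset.sum_add_distrib]
      refine Finset.sum_congr rfl fun j _ => ?_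
      rw [← Finset.sum_add_distrib]
      refine Finset.sum_congr rfl fun k _ => ?_
      rw [star_add, add_mul, add_mul]
    have hD : (∑ j, ∑ k, star (G₃.L j) * G₃.S j k * (G₂.L k + ∑ m, G₂.S k m * G₁.L m))
        = (∑ j, ∑ k, star (G₃.L j) * G₃.S j k * G₂.L k)
          + ∑ j, ∑ k, star (G₃.L j) * (G₃.S * G₂.S) j k * G₁.L k := by
      rw [← Finset.sum_add_distrib]
      refine Finset.sum_congr rfl fun j _ => ?_
      have h' : ∀ k, star (G₃.L j) * (G₃.S * G₂.S) j k * G₁.L k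
          = ∑ l, star (G₃.L j) * G₃.S j l * (G₂.S l k * G₁.L k) := by
        intro k
        simp only [Matrix.mul_apply, Finset.mul_sum, Finset.sum_mul, mul_assoc]
      simp only [mul_add, Finset.mul_sum, Finset.sum_add_distrib]
      congr 1
      rw [Finset.sum_comm]
      exact Finset.sum_congr rfl fun x _ => (h' x).symm
    rw [hB, hD, imOp_add', imOp_add']
    abel
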